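/- Let n ≥ 1, y ∈ ℝⁿ, τ ∈ ℝⁿ with τ_i > 0, and let u*(λ) be the unique minimizer of F(·, y, τ, λ). For every index i ∈ {1,…,n−1} there exists a value λ°_i ≥ 0 such that for all λ ≥ 0: u*_i(λ) = u*_{i+1}(λ) if and only if λ ≥ λ°_i. (In particular the set of λ at which the points i and i+1 are merged is a closed half-line.) -/

import Mathlib

/-- The weighted total-variation functional
`F(u, y, τ, λ) = Σ_{i=1}^n τ_i (y_i − u_i)² + λ Σ_{i=1}^{n−1} |u_{i+1} − u_i|`
for a signal with `n + 1` samples (indexed by `Fin (n+1)`, so that the number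
of samples is an arbitrary integer `≥ 1`). -/
noncomputable def tvF (n : ℕ) (y τ : Fin (n + 1) → ℝ) (lam : ℝ)
    (u : Fin (n + 1) → ℝ) : ℝ :=
  (∑ i : Fin (n + 1), τ i * (y i - u i) ^ 2) +
    lam * ∑ i : Fin n, |u i.succ - u i.castSucc|

namespace TVM

noncomputable def pg (n : ℕ) (y τ u : Fin (n + 1) → ℝ) (k : ℕ) : ℝ :=
  ∑ j : Fin (n + 1), if j.val < k then 2 * τ j * (u j - y j) else 0

variable {n : ℕ} {y τ : Fin (n + 1) → ℝ} {lam lam' : ℝ} {u v : Fin (n + 1) → ℝ}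

lemma pg_zero (n : ℕ) (y τ u : Fin (n + 1) → ℝ) : pg n y τ u 0 = 0 := by
  simp [pg]

lemma pg_stable (n : ℕ) (y τ u : Fin (n + 1) → ℝ) {k : ℕ} (hk : n + 1 ≤ k) :
    pg n y τ u k = pg n y τ u (n + 1) := by
  unfold pg
  refine Finset.sum_congr rfl fun j _ => ?_
  have h1 : j.val < k := lt_of_lt_of_le j.isLt hk
  have h2 : j.val < n + 1 := j.isLt
  simp [h1, h2]

lemma pg_succ_sub (n : ℕ) (y τ u : Fin (n + 1) → ℝ) (k : ℕ) (j : Fin (n + 1))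
    (hj : j.val = k) :
    pg n y τ u (k + 1) - pg n y τ u k = 2 * τ j * (u j - y j) := by
  unfold pg
  rw [← Finset.sum_sub_distrib]
  rw [Finset.sum_eq_single j]
  · have h1 : j.val < k + 1 := by omega
    have h2 : ¬ j.val < k := by omega
    simp [h1, h2]
  · intro b _ hb
    have : b.val ≠ k := fun h => hb (Fin.ext (h.trans hj.symm))
    by_cases h : b.val < k
    · have : b.val < k + 1 := by omega
      simp [h, this]
    · have : ¬ b.val < k + 1 := by omega
      simp [h, this]
  · intro h; exact absurd (Finset.mem_univ j) h

lemma scalar_zero {A B : ℝ} (hA : 0 < A) (h : ∀ t : ℝ, 0 ≤ A * t ^ 2 + B * t) :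
    B = 0 := by
  by_contra hB
  have h1 := h (-(B / (2 * A)))
  have hval : A * (-(B / (2 * A))) ^ 2 + B * (-(B / (2 * A))) = -(B ^ 2 / (4 * A)) := by
    field_simp; ring
  have hpos : 0 < B ^ 2 / (4 * A) := by positivity
  linarith [hval ▸ h1]

lemma scalar_small {A C d : ℝ} (hA : 0 < A) (hd : 0 < d)
    (h : ∀ t : ℝ, |t| < d → 0 ≤ A * t ^ 2 + C * t) : C = 0 := by
  have h2A : (0:ℝ) < 2 * A := by positivity
  rcases lt_trichotomy C 0 with hC | hC | hC
  · set e : ℝ := min (-C / (2 * A)) (d / 2) with he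
    have he1 : 0 < e := lt_min (div_pos (by linarith) h2A) (by positivity)
    have he2 : e * (2 * A) ≤ -C := (le_div_iff₀ h2A).mp (min_le_left _ _)
    have he3 : e ≤ d / 2 := min_le_right _ _
    have h1 := h e (by rw [abs_of_pos he1]; linarith)
    nlinarith [mul_le_mul_of_nonneg_right he2 he1.le, mul_neg_of_neg_of_pos hC he1]
  · exact hC
  · set e : ℝ := min (C / (2 * A)) (d / 2) with he
    have he1 : 0 < e := lt_min (by positivity) (by positivity)
    have he2 : e * (2 * A) ≤ C := (le_div_iff₀ h2A).mp (min_le_left _ _)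
    have he3 : e ≤ d / 2 := min_le_right _ _
    have h1 := h (-e) (by rw [abs_of_neg (by linarith)]; linarith)
    nlinarith [mul_le_mul_of_nonneg_right he2 he1.le, mul_pos hC he1]

lemma scalar_abs {A B lam : ℝ} (hA : 0 < A)
    (h : ∀ t : ℝ, 0 ≤ A * t ^ 2 + B * t + lam * |t|) : |B| ≤ lam := by
  rw [abs_le]
  constructor
  · by_contra hB
    push_neg at hB
    set e : ℝ := (-lam - B) / (2 * A) with he
    have hc : 0 < -lam - B := by linarith
    have he1 : 0 < e := by positivity
    have h1 := h e
    rw [abs_of_pos he1] at h1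
    have hval : A * e ^ 2 + B * e + lam * e = -((-lam - B) ^ 2 / (4 * A)) := by
      rw [he]; field_simp; ring
    have hpos : 0 < (-lam - B) ^ 2 / (4 * A) := by positivity
    linarith [hval ▸ h1]
  · by_contra hB
    push_neg at hB
    set e : ℝ := (B - lam) / (2 * A) with he
    have hc : 0 < B - lam := by linarith
    have he1 : 0 < e := by positivity
    have h1 := h (-e)
    rw [abs_of_neg (by linarith)] at h1
    have hval : A * (-e) ^ 2 + B * (-e) + lam * (- -e) = -((B - lam) ^ 2 / (4 * A)) := by
      rw [he]; field_simp; ring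
    have hpos : 0 < (B - lam) ^ 2 / (4 * A) := by positivity
    linarith [hval ▸ h1]

lemma tvF_shift (n : ℕ) (y τ : Fin (n + 1) → ℝ) (lam t : ℝ) (u : Fin (n + 1) → ℝ) :
    tvF n y τ lam (fun j => u j + t)
      = tvF n y τ lam u + (∑ j, τ j) * t ^ 2 + pg n y τ u (n + 1) * t := by
  have hQ : ∑ j : Fin (n + 1), τ j * (y j - (u j + t)) ^ 2
      = ∑ j : Fin (n + 1), (τ j * (y j - u j) ^ 2 + τ j * t ^ 2
          + (if j.val < n + 1 then 2 * τ j * (u j - y j) else 0) * t) := by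
    refine Finset.sum_congr rfl fun j _ => ?_
    simp only [j.isLt, if_true]
    ring
  have hTV : ∑ e : Fin n, |(u e.succ + t) - (u e.castSucc + t)|
      = ∑ e : Fin n, |u e.succ - u e.castSucc| := by
    refine Finset.sum_congr rfl fun e _ => ?_
    ring_nf
  simp only [tvF, pg, hQ, hTV, Finset.sum_add_distrib, ← Finset.sum_mul]
  ring

lemma tvF_prefix (n : ℕ) (y τ : Fin (n + 1) → ℝ) (lam t : ℝ) (u : Fin (n + 1) → ℝ)
    (i : Fin n) :
    tvF n y τ lam (fun j => u j + t * (if j.val ≤ i.val then 1 else 0))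
      = tvF n y τ lam u + (∑ j, if j.val ≤ i.val then τ j else 0) * t ^ 2
        + pg n y τ u (i.val + 1) * t
        + lam * (|u i.succ - u i.castSucc - t| - |u i.succ - u i.castSucc|) := by
  have hQ : ∑ j : Fin (n + 1), τ j * (y j - (u j + t * (if j.val ≤ i.val then 1 else 0))) ^ 2
      = ∑ j : Fin (n + 1), (τ j * (y j - u j) ^ 2 + (if j.val ≤ i.val then τ j else 0) * t ^ 2
          + (if j.val < i.val + 1 then 2 * τ j * (u j - y j) else 0) * t) := by
    refine Finset.sum_congr rfl fun j _ => ?_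
    by_cases hj : j.val ≤ i.val
    · have hj' : j.val < i.val + 1 := by omega
      simp only [hj, hj', if_true]
      ring
    · have hj' : ¬ j.val < i.val + 1 := by omega
      simp only [hj, hj', if_false]
      ring
  have hTV : ∑ e : Fin n, |(u e.succ + t * (if e.succ.val ≤ i.val then 1 else 0))
        - (u e.castSucc + t * (if e.castSucc.val ≤ i.val then 1 else 0))|
      = ∑ e : Fin n, (|u e.succ - u e.castSucc|
          + (if e = i then |u i.succ - u i.castSucc - t| - |u i.succ - u i.castSucc| else 0)) := by
    refine Finset.sum_congr rfl fun e _ => ?_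
    by_cases he : e = i
    · subst he
      have h1 : ¬ e.succ.val ≤ e.val := by simp [Fin.val_succ]
      have h2 : e.castSucc.val ≤ e.val := by simp [Fin.coe_castSucc]
      simp only [h1, h2, if_true, if_false, if_pos rfl]
      ring_nf
    · have hv : e.val ≠ i.val := fun h => he (Fin.ext h)
      have hiff : (e.succ.val ≤ i.val) ↔ (e.castSucc.val ≤ i.val) := by
        simp only [Fin.val_succ, Fin.coe_castSucc]; omega
      by_cases h2 : e.castSucc.val ≤ i.val
      · have h1 : e.succ.val ≤ i.val := hiff.mpr h2
        simp only [h1, h2, if_true, he, if_false]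
        ring_nf
      · have h1 : ¬ e.succ.val ≤ i.val := fun h => h2 (hiff.mp h)
        simp only [h1, h2, if_false, he]
        ring_nf
  simp only [tvF, pg, hQ, hTV, Finset.sum_add_distrib, ← Finset.sum_mul,
    Finset.sum_ite_eq' Finset.univ i, Finset.mem_univ, if_true]
  ring

lemma kkt_total (hτ : ∀ j, 0 < τ j)
    (hmin : ∀ v, tvF n y τ lam u ≤ tvF n y τ lam v) :
    pg n y τ u (n + 1) = 0 := by
  refine scalar_zero (Finset.sum_pos (fun j _ => hτ j) Finset.univ_nonempty) fun t => ?_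
  have h := hmin (fun j => u j + t)
  rw [tvF_shift] at h
  linarith

lemma prefix_pos (hτ : ∀ j, 0 < τ j) (i : Fin n) :
    0 < ∑ j : Fin (n + 1), if j.val ≤ i.val then τ j else 0 := by
  refine Finset.sum_pos' (fun j _ => by by_cases h : j.val ≤ i.val <;> simp [h, (hτ j).le]) ⟨i.castSucc, Finset.mem_univ _, ?_⟩
  simp only [Fin.coe_castSucc, le_refl, if_true]
  exact hτ _

lemma kkt_base (hmin : ∀ v, tvF n y τ lam u ≤ tvF n y τ lam v) (i : Fin n) (t : ℝ) :
    0 ≤ (∑ j : Fin (n + 1), if j.val ≤ i.val then τ j else 0) * t ^ 2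
        + pg n y τ u (i.val + 1) * t
        + lam * (|u i.succ - u i.castSucc - t| - |u i.succ - u i.castSucc|) := by
  have h := hmin (fun j => u j + t * (if j.val ≤ i.val then 1 else 0))
  rw [tvF_prefix] at h
  linarith

lemma kkt_pos (hτ : ∀ j, 0 < τ j)
    (hmin : ∀ v, tvF n y τ lam u ≤ tvF n y τ lam v) (i : Fin n)
    (hd : u i.castSucc < u i.succ) : pg n y τ u (i.val + 1) = lam := by
  have h0 := scalar_small (prefix_pos hτ i) (sub_pos.mpr hd)
    (C := pg n y τ u (i.val + 1) - lam) (fun t ht => ?_)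
  · linarith
  · have h := kkt_base hmin i t
    rw [abs_lt] at ht
    have h1 : |u i.succ - u i.castSucc - t| = u i.succ - u i.castSucc - t := by
      rw [abs_of_pos]; linarith
    have h2 : |u i.succ - u i.castSucc| = u i.succ - u i.castSucc := by
      rw [abs_of_pos]; linarith
    rw [h1, h2] at h
    nlinarith [h]

lemma kkt_neg (hτ : ∀ j, 0 < τ j)
    (hmin : ∀ v, tvF n y τ lam u ≤ tvF n y τ lam v) (i : Fin n)
    (hd : u i.succ < u i.castSucc) : pg n y τ u (i.val + 1) = -lam := by
  have h0 := scalar_small (prefix_pos hτ i) (sub_pos.mpr hd)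
    (C := pg n y τ u (i.val + 1) + lam) (fun t ht => ?_)
  · linarith
  · have h := kkt_base hmin i t
    rw [abs_lt] at ht
    have h1 : |u i.succ - u i.castSucc - t| = -(u i.succ - u i.castSucc - t) := by
      rw [abs_of_neg]; linarith
    have h2 : |u i.succ - u i.castSucc| = -(u i.succ - u i.castSucc) := by
      rw [abs_of_neg]; linarith
    rw [h1, h2] at h
    nlinarith [h]

lemma kkt_abs (hτ : ∀ j, 0 < τ j) (hlam : 0 ≤ lam)
    (hmin : ∀ v, tvF n y τ lam u ≤ tvF n y τ lam v) (i : Fin n) :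
    |pg n y τ u (i.val + 1)| ≤ lam := by
  rcases lt_trichotomy (u i.succ) (u i.castSucc) with hd | hd | hd
  · rw [kkt_neg hτ hmin i hd, abs_neg, abs_of_nonneg hlam]
  · refine scalar_abs (prefix_pos hτ i) fun t => ?_
    have h := kkt_base hmin i t
    have hd' : u i.succ - u i.castSucc = 0 := by rw [hd]; ring
    rw [hd'] at h
    simp only [zero_sub, abs_neg, abs_zero, sub_zero] at h
    linarith
  · rw [kkt_pos hτ hmin i hd, abs_of_nonneg hlam]

lemma max_prin (hτ : ∀ j, 0 < τ j) (hlam : 0 ≤ lam) (hll : lam ≤ lam')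
    (hminu : ∀ w, tvF n y τ lam u ≤ tvF n y τ lam w)
    (hminv : ∀ w, tvF n y τ lam' v ≤ tvF n y τ lam' w) :
    ∀ k : ℕ, pg n y τ v k - pg n y τ u k ≤ lam' - lam := by
  have hlam' : 0 ≤ lam' := le_trans hlam hll
  have hend : pg n y τ v (n + 1) - pg n y τ u (n + 1) = 0 := by
    rw [kkt_total hτ hminu, kkt_total hτ hminv]; ring
  have hzero : pg n y τ v 0 - pg n y τ u 0 = 0 := by rw [pg_zero, pg_zero]; ring
  suffices hcl : ∀ k ∈ Finset.range (n + 2),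
      pg n y τ v k - pg n y τ u k ≤ lam' - lam by
    intro k
    rcases le_or_gt k (n + 1) with hk | hk
    · exact hcl k (Finset.mem_range.mpr (by omega))
    · rw [pg_stable n y τ v (by omega : n + 1 ≤ k), pg_stable n y τ u (by omega : n + 1 ≤ k)]
      exact hcl (n + 1) (Finset.mem_range.mpr (by omega))
  by_contra hcon
  push_neg at hcon
  obtain ⟨kb, hkb, hkbM⟩ := hcon
  have hne : (Finset.range (n + 2)).Nonempty := ⟨0, Finset.mem_range.mpr (by omega)⟩
  obtain ⟨M, hMax, hMmem⟩ : ∃ M : ℝ, (∀ k ∈ Finset.range (n + 2),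
      pg n y τ v k - pg n y τ u k ≤ M) ∧
      ∃ k ∈ Finset.range (n + 2), pg n y τ v k - pg n y τ u k = M := by
    refine ⟨Finset.sup' (Finset.range (n + 2)) hne
      (fun k => pg n y τ v k - pg n y τ u k),
      fun k hk => Finset.le_sup' (fun k => pg n y τ v k - pg n y τ u k) hk, ?_⟩
    obtain ⟨k₀, hk₀, hk₀M⟩ := Finset.exists_mem_eq_sup' hne
      (fun k => pg n y τ v k - pg n y τ u k)
    exact ⟨k₀, hk₀, hk₀M.symm⟩
  have hMbig : lam' - lam < M := lt_of_lt_of_le hkbM (hMax kb hkb)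
  have hMpos : 0 < M := lt_of_le_of_lt (by linarith) hMbig
  have hex : ∃ k, pg n y τ v k - pg n y τ u k = M ∧ k < n + 2 := by
    obtain ⟨k₀, hk₀, hk₀M⟩ := hMmem
    exact ⟨k₀, hk₀M, Finset.mem_range.mp hk₀⟩
  obtain ⟨k₀, ⟨hk₀M, hk₀lt⟩, hleast⟩ :
      ∃ k₀, (pg n y τ v k₀ - pg n y τ u k₀ = M ∧ k₀ < n + 2) ∧
        ∀ m, m < k₀ → pg n y τ v m - pg n y τ u m ≠ M := by
    refine ⟨Nat.find hex, Nat.find_spec hex, fun m hm hma => ?_⟩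
    exact Nat.find_min hex hm ⟨hma, by have := (Nat.find_spec hex).2; omega⟩
  have hk₀ne0 : k₀ ≠ 0 := by
    intro h0
    rw [h0, hzero] at hk₀M
    linarith
  have hk₀nen1 : k₀ ≠ n + 1 := by
    intro h0
    rw [h0, hend] at hk₀M
    linarith
  have hk₀le : k₀ ≤ n := by omega
  set I : Fin n := ⟨k₀ - 1, by omega⟩ with hIdef
  have hIc : (I.castSucc : Fin (n + 1)).val = k₀ - 1 := rfl
  have hIs : (I.succ : Fin (n + 1)).val = k₀ := by
    simp only [Fin.val_succ, hIdef]; omega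
  have hIv1 : (I : Fin n).val + 1 = k₀ := by simp only [hIdef]; omega
  -- KKT facts at edge I
  have habsu : |pg n y τ u k₀| ≤ lam := by rw [← hIv1]; exact kkt_abs hτ hlam hminu I
  have habsv : |pg n y τ v k₀| ≤ lam' := by rw [← hIv1]; exact kkt_abs hτ hlam' hminv I
  rw [abs_le] at habsu habsv
  -- u I.succ ≤ u I.castSucc
  have hus : u I.succ ≤ u I.castSucc := by
    by_contra hc
    push_neg at hc
    have := kkt_pos hτ hminu I hc
    rw [hIv1] at this
    linarith
  -- v I.castSucc ≤ v I.succ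
  have hvs : v I.castSucc ≤ v I.succ := by
    by_contra hc
    push_neg at hc
    have := kkt_neg hτ hminv I hc
    rw [hIv1] at this
    linarith
  -- difference identities
  have hdu1 := pg_succ_sub n y τ u (k₀ - 1) I.castSucc hIc
  have hdv1 := pg_succ_sub n y τ v (k₀ - 1) I.castSucc hIc
  have hdu2 := pg_succ_sub n y τ u k₀ I.succ hIs
  have hdv2 := pg_succ_sub n y τ v k₀ I.succ hIs
  have hk₀11 : k₀ - 1 + 1 = k₀ := by omega
  rw [hk₀11] at hdu1 hdv1
  have hprev : pg n y τ v (k₀ - 1) - pg n y τ u (k₀ - 1) < M :=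
    lt_of_le_of_ne (hMax _ (Finset.mem_range.mpr (by omega))) (hleast _ (by omega))
  have hnext : pg n y τ v (k₀ + 1) - pg n y τ u (k₀ + 1) ≤ M :=
    hMax _ (Finset.mem_range.mpr (by omega))
  -- v I.castSucc > u I.castSucc
  have hc1 : 0 < 2 * τ I.castSucc * (v I.castSucc - y I.castSucc)
      - 2 * τ I.castSucc * (u I.castSucc - y I.castSucc) := by linarith
  have hc1' : u I.castSucc < v I.castSucc := by
    by_contra hc
    push_neg at hc
    nlinarith [hc1, mul_nonneg (hτ I.castSucc).le (sub_nonneg.mpr hc)]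
  -- v I.succ ≤ u I.succ
  have hc2 : 2 * τ I.succ * (v I.succ - y I.succ)
      - 2 * τ I.succ * (u I.succ - y I.succ) ≤ 0 := by linarith
  have hc2' : v I.succ ≤ u I.succ := by
    by_contra hc
    push_neg at hc
    nlinarith [hc2, mul_pos (hτ I.succ) (sub_pos.mpr hc)]
  linarith

lemma tvF_negy (w : Fin (n + 1) → ℝ) :
    tvF n (fun j => -y j) τ lam w = tvF n y τ lam (fun j => -w j) := by
  unfold tvF
  congr 1
  · refine Finset.sum_congr rfl fun j _ => ?_
    ring
  · congr 1
    refine Finset.sum_congr rfl fun e _ => ?_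
    rw [← abs_neg]
    ring_nf

lemma pg_negy (k : ℕ) :
    pg n (fun j => -y j) τ (fun j => -u j) k = -pg n y τ u k := by
  unfold pg
  rw [← Finset.sum_neg_distrib]
  refine Finset.sum_congr rfl fun j _ => ?_
  split_ifs <;> ring

lemma min_negy (hmin : ∀ w, tvF n y τ lam u ≤ tvF n y τ lam w) :
    ∀ w, tvF n (fun j => -y j) τ lam (fun j => -u j) ≤ tvF n (fun j => -y j) τ lam w := by
  intro w
  rw [tvF_negy, tvF_negy]
  have h1 : (fun j => -(-u j)) = u := by funext j; ring
  rw [h1]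
  exact hmin _

lemma min_prin (hτ : ∀ j, 0 < τ j) (hlam : 0 ≤ lam) (hll : lam ≤ lam')
    (hminu : ∀ w, tvF n y τ lam u ≤ tvF n y τ lam w)
    (hminv : ∀ w, tvF n y τ lam' v ≤ tvF n y τ lam' w) :
    ∀ k : ℕ, -(lam' - lam) ≤ pg n y τ v k - pg n y τ u k := by
  intro k
  have h := max_prin (y := fun j => -y j) hτ hlam hll
    (min_negy hminu) (min_negy hminv) k
  rw [pg_negy, pg_negy] at h
  linarith

lemma cmp_le {τj a b c : ℝ} (hτj : 0 < τj)
    (h : 2 * τj * (a - c) - 2 * τj * (b - c) ≤ 0) : a ≤ b := by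
  by_contra hc
  push_neg at hc
  nlinarith [mul_pos hτj (sub_pos.mpr hc)]

lemma no_split (hτ : ∀ j, 0 < τ j) (hlam : 0 ≤ lam) (hll : lam ≤ lam')
    (hminu : ∀ w, tvF n y τ lam u ≤ tvF n y τ lam w)
    (hminv : ∀ w, tvF n y τ lam' v ≤ tvF n y τ lam' w)
    (i : Fin n) (hu : u i.succ = u i.castSucc) : v i.succ = v i.castSucc := by
  have hlam' : 0 ≤ lam' := le_trans hlam hll
  have hmax := max_prin hτ hlam hll hminu hminv
  have hmin' := min_prin hτ hlam hll hminu hminv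
  have hIc : (i.castSucc : Fin (n + 1)).val = i.val := rfl
  have hIs : (i.succ : Fin (n + 1)).val = i.val + 1 := by simp [Fin.val_succ]
  have hdu1 := pg_succ_sub n y τ u i.val i.castSucc hIc
  have hdv1 := pg_succ_sub n y τ v i.val i.castSucc hIc
  have hdu2 := pg_succ_sub n y τ u (i.val + 1) i.succ hIs
  have hdv2 := pg_succ_sub n y τ v (i.val + 1) i.succ hIs
  have habsu := kkt_abs hτ hlam hminu i
  rw [abs_le] at habsu
  rcases lt_trichotomy (v i.succ) (v i.castSucc) with hc | hc | hc
  · exfalso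
    have hgv := kkt_neg hτ hminv i hc
    have h1 : pg n y τ v (i.val + 1) - pg n y τ u (i.val + 1) ≤ -(lam' - lam) := by
      rw [hgv]; linarith
    have h2 := hmin' i.val
    have h3 := hmin' (i.val + 2)
    have hvc : v i.castSucc ≤ u i.castSucc := cmp_le (hτ i.castSucc) (by linarith)
    have hvs : u i.succ ≤ v i.succ := cmp_le (hτ i.succ) (by linarith)
    linarith
  · exact hc
  · exfalso
    have hgv := kkt_pos hτ hminv i hc
    have h1 : lam' - lam ≤ pg n y τ v (i.val + 1) - pg n y τ u (i.val + 1) := by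
      rw [hgv]; linarith
    have h2 := hmax i.val
    have h3 := hmax (i.val + 2)
    have hvc : u i.castSucc ≤ v i.castSucc := cmp_le (hτ i.castSucc) (by linarith)
    have hvs : v i.succ ≤ u i.succ := cmp_le (hτ i.succ) (by linarith)
    linarith

lemma abel (u w : Fin (n + 1) → ℝ) :
    ∑ j : Fin (n + 1), 2 * τ j * (u j - y j) * w j
      = ∑ i : Fin n, pg n y τ u (i.val + 1) * (w i.castSucc - w i.succ)
        + pg n y τ u (n + 1) * w (Fin.last n) := by
  have hp : ∀ j : Fin (n + 1), 2 * τ j * (u j - y j) * w j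
      = pg n y τ u (j.val + 1) * w j - pg n y τ u j.val * w j := by
    intro j
    rw [← (pg_succ_sub n y τ u j.val j rfl)]
    ring
  rw [Finset.sum_congr rfl fun j _ => hp j, Finset.sum_sub_distrib]
  rw [Fin.sum_univ_castSucc (f := fun j : Fin (n + 1) => pg n y τ u (j.val + 1) * w j)]
  rw [Fin.sum_univ_succ (f := fun j : Fin (n + 1) => pg n y τ u j.val * w j)]
  simp only [Fin.coe_castSucc, Fin.val_succ, Fin.val_last, Fin.val_zero, pg_zero,
    zero_mul, zero_add]
  have hsplit : ∑ i : Fin n, pg n y τ u (i.val + 1) * (w i.castSucc - w i.succ)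
      = ∑ i : Fin n, pg n y τ u (i.val + 1) * w i.castSucc
        - ∑ i : Fin n, pg n y τ u (i.val + 1) * w i.succ := by
    rw [← Finset.sum_sub_distrib]
    exact Finset.sum_congr rfl fun i _ => by ring
  rw [hsplit]
  ring

lemma exists_merged (hτ : ∀ j, 0 < τ j) :
    ∃ lam : ℝ, 0 ≤ lam ∧ ∃ u : Fin (n + 1) → ℝ,
      (∀ w, tvF n y τ lam u ≤ tvF n y τ lam w) ∧
      ∀ i : Fin n, u i.succ = u i.castSucc := by
  have hT : 0 < ∑ j : Fin (n + 1), τ j := Finset.sum_pos (fun j _ => hτ j) Finset.univ_nonempty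
  set μ : ℝ := (∑ j : Fin (n + 1), τ j * y j) / (∑ j : Fin (n + 1), τ j) with hμ
  set U : Fin (n + 1) → ℝ := fun _ => μ with hU
  set lam : ℝ := ∑ i : Fin n, |pg n y τ U (i.val + 1)| with hlam
  have hlam0 : 0 ≤ lam := Finset.sum_nonneg fun i _ => abs_nonneg _
  have hcbd : ∀ i : Fin n, |pg n y τ U (i.val + 1)| ≤ lam := fun i =>
    Finset.single_le_sum (f := fun i => |pg n y τ U (i.val + 1)|) (fun j _ => abs_nonneg _)
      (Finset.mem_univ i)
  have htot : pg n y τ U (n + 1) = 0 := by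
    unfold pg
    have : ∀ j : Fin (n + 1), (if (j.val < n + 1) then 2 * τ j * (U j - y j) else 0)
        = 2 * τ j * μ - 2 * τ j * y j := fun j => by simp [j.isLt, hU]; ring
    rw [Finset.sum_congr rfl fun j _ => this j, Finset.sum_sub_distrib]
    have h1 : ∑ j : Fin (n + 1), 2 * τ j * μ = 2 * μ * ∑ j : Fin (n + 1), τ j := by
      rw [← Finset.sum_mul, ← Finset.mul_sum]
      ring
    have h2 : ∑ j : Fin (n + 1), 2 * τ j * y j = 2 * ∑ j : Fin (n + 1), τ j * y j := by
      rw [Finset.mul_sum]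
      exact Finset.sum_congr rfl fun j _ => by ring
    rw [h1, h2, hμ]
    field_simp
    ring
  refine ⟨lam, hlam0, U, ?_, fun i => rfl⟩
  intro w
  have hquad : ∑ j : Fin (n + 1), τ j * (y j - w j) ^ 2
      = ∑ j : Fin (n + 1), τ j * (y j - U j) ^ 2
        + ∑ j : Fin (n + 1), τ j * (w j - μ) ^ 2
        + ∑ j : Fin (n + 1), 2 * τ j * (U j - y j) * (w j - μ) := by
    rw [← Finset.sum_add_distrib, ← Finset.sum_add_distrib]
    exact Finset.sum_congr rfl fun j _ => by simp only [hU]; ring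
  have habel := abel (y := y) (τ := τ) U (fun j => w j - μ)
  rw [htot, zero_mul, add_zero] at habel
  have hJU : ∑ i : Fin n, |U i.succ - U i.castSucc| = 0 := by
    simp [hU]
  have hper : ∀ i : Fin n, 0 ≤ pg n y τ U (i.val + 1) * ((w i.castSucc - μ) - (w i.succ - μ))
      + lam * |w i.succ - w i.castSucc| := by
    intro i
    have h1 : pg n y τ U (i.val + 1) * ((w i.castSucc - μ) - (w i.succ - μ))
        = pg n y τ U (i.val + 1) * (w i.castSucc - w i.succ) := by
      ring
    rw [h1]
    have h2 : -(|pg n y τ U (i.val + 1)| * |w i.castSucc - w i.succ|)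
        ≤ pg n y τ U (i.val + 1) * (w i.castSucc - w i.succ) := by
      rw [← abs_mul]
      exact neg_abs_le _
    have h3 : |w i.castSucc - w i.succ| = |w i.succ - w i.castSucc| := abs_sub_comm _ _
    nlinarith [mul_le_mul_of_nonneg_right (hcbd i) (abs_nonneg (w i.castSucc - w i.succ)),
      abs_nonneg (w i.castSucc - w i.succ)]
  simp only [tvF, hquad, hJU, mul_zero, add_zero]
  rw [habel, Finset.mul_sum]
  have hsum := Finset.sum_nonneg (fun i (_ : i ∈ Finset.univ) => hper i)
  rw [Finset.sum_add_distrib] at hsum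
  have hq2 : 0 ≤ ∑ j : Fin (n + 1), τ j * (w j - μ) ^ 2 :=
    Finset.sum_nonneg fun j _ => mul_nonneg (hτ j).le (sq_nonneg _)
  linarith

lemma stab {lam₀ lam' : ℝ} (hτ : ∀ j, 0 < τ j) (hlam₀ : 0 ≤ lam₀) (hll : lam₀ ≤ lam')
    (hminu : ∀ w, tvF n y τ lam₀ u ≤ tvF n y τ lam₀ w)
    (hminv : ∀ w, tvF n y τ lam' v ≤ tvF n y τ lam' w) :
    ∑ j : Fin (n + 1), τ j * (u j - v j) ^ 2
      ≤ 2 * (lam' - lam₀) * ∑ e : Fin n, |u e.succ - u e.castSucc| := by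
  set mid : Fin (n + 1) → ℝ := fun j => (u j + v j) / 2 with hmid
  have h1 := hminu mid
  have h2 : tvF n y τ lam₀ mid ≤ (tvF n y τ lam₀ u + tvF n y τ lam₀ v) / 2
      - (∑ j : Fin (n + 1), τ j * (u j - v j) ^ 2) / 4 := by
    unfold tvF
    have hq : ∑ j : Fin (n + 1), τ j * (y j - mid j) ^ 2
        = (∑ j : Fin (n + 1), τ j * (y j - u j) ^ 2
            + ∑ j : Fin (n + 1), τ j * (y j - v j) ^ 2) / 2
          - (∑ j : Fin (n + 1), τ j * (u j - v j) ^ 2) / 4 := by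
      rw [← Finset.sum_add_distrib]
      rw [show (∑ j : Fin (n+1), (τ j * (y j - u j) ^ 2 + τ j * (y j - v j) ^ 2)) / 2
          - (∑ j : Fin (n+1), τ j * (u j - v j) ^ 2) / 4
        = ∑ j : Fin (n+1), ((τ j * (y j - u j) ^ 2 + τ j * (y j - v j) ^ 2) / 2
            - (τ j * (u j - v j) ^ 2) / 4) by
          rw [Finset.sum_sub_distrib, Finset.sum_div, Finset.sum_div]]
      exact Finset.sum_congr rfl fun j _ => by simp only [hmid]; ring
    have hJ : ∑ e : Fin n, |mid e.succ - mid e.castSucc|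
        ≤ (∑ e : Fin n, |u e.succ - u e.castSucc|
            + ∑ e : Fin n, |v e.succ - v e.castSucc|) / 2 := by
      rw [← Finset.sum_add_distrib, Finset.sum_div]
      refine Finset.sum_le_sum fun e _ => ?_
      have : mid e.succ - mid e.castSucc
          = ((u e.succ - u e.castSucc) + (v e.succ - v e.castSucc)) / 2 := by
        simp only [hmid]; ring
      rw [this, abs_div]
      have := abs_add_le (u e.succ - u e.castSucc) (v e.succ - v e.castSucc)
      rw [show |(2:ℝ)| = 2 by norm_num]
      linarith
    have := mul_le_mul_of_nonneg_left hJ hlam₀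
    rw [hq]
    linarith
  have h3 : tvF n y τ lam₀ v ≤ tvF n y τ lam₀ u
      + (lam' - lam₀) * ∑ e : Fin n, |u e.succ - u e.castSucc|
      - (lam' - lam₀) * ∑ e : Fin n, |v e.succ - v e.castSucc| := by
    have hv := hminv u
    simp only [tvF] at hv ⊢
    linarith
  have hJv : 0 ≤ ∑ e : Fin n, |v e.succ - v e.castSucc| :=
    Finset.sum_nonneg fun e _ => abs_nonneg _
  have hll0 : 0 ≤ lam' - lam₀ := by linarith
  nlinarith [mul_nonneg hll0 hJv]

end TVM

set_option maxHeartbeats 1600000 in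
/-- For every adjacent pair `(i, i+1)` there is a merge value `λ°_i ≥ 0` such that,
for every `λ ≥ 0`, the minimizer of `F(·, y, τ, λ)` takes the same value at `i`
and `i+1` if and only if `λ ≥ λ°_i` : the set of `λ` at which the two points are
merged is a closed half-line. -/
theorem tv_merge_halfLine (n : ℕ) (y τ : Fin (n + 1) → ℝ) (hτ : ∀ i, 0 < τ i)
    (i : Fin n) :
    ∃ lam₀ : ℝ, 0 ≤ lam₀ ∧ ∀ lam : ℝ, 0 ≤ lam →
      ∀ u : Fin (n + 1) → ℝ,
        (∀ v : Fin (n + 1) → ℝ, tvF n y τ lam u ≤ tvF n y τ lam v) →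
          (u i.succ = u i.castSucc ↔ lam₀ ≤ lam) := by
  classical
  set S : Set ℝ := {lam | 0 ≤ lam ∧ ∃ u : Fin (n + 1) → ℝ,
    (∀ w, tvF n y τ lam u ≤ tvF n y τ lam w) ∧ u i.succ = u i.castSucc} with hS
  have hSne : S.Nonempty := by
    obtain ⟨lamE, hlamE0, uE, hminE, hmE⟩ := TVM.exists_merged (y := y) hτ
    exact ⟨lamE, hlamE0, uE, hminE, hmE i⟩
  have hSbd : BddBelow S := ⟨0, fun x hx => hx.1⟩
  refine ⟨sInf S, le_csInf hSne fun x hx => hx.1, fun lam hlam u hminu => ?_⟩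
  constructor
  · intro hmerge
    exact csInf_le hSbd ⟨hlam, u, hminu, hmerge⟩
  · intro hge
    rcases hge.lt_or_eq with hlt | heq
    · -- sInf S < lam : use no-splitting
      obtain ⟨μ, hμS, hμlt⟩ := exists_lt_of_csInf_lt hSne hlt
      obtain ⟨hμ0, v, hminv, hv⟩ := hμS
      exact TVM.no_split hτ hμ0 hμlt.le hminv hminu i hv
    · -- lam = sInf S : closedness via strong-convexity stability
      have hτs := hτ i.succ
      have hτc := hτ i.castSucc
      set J : ℝ := ∑ e : Fin n, |u e.succ - u e.castSucc| with hJdef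
      have hJ : 0 ≤ J := Finset.sum_nonneg fun e _ => abs_nonneg _
      set D : ℝ := (u i.succ - u i.castSucc) ^ 2 with hDdef
      set K : ℝ := 4 * (J + 1) * (τ i.succ + τ i.castSucc) with hKdef
      have hK : 0 < K := by positivity
      have claim : ∀ ε : ℝ, 0 < ε → τ i.succ * τ i.castSucc * D ≤ ε * K := by
        intro ε hε
        obtain ⟨μ, hμS, hμlt⟩ := exists_lt_of_csInf_lt hSne
          (show sInf S < lam + ε by linarith)
        obtain ⟨hμ0, v, hminv, hv⟩ := hμS
        have hlamμ : lam ≤ μ := heq ▸ csInf_le hSbd ⟨hμ0, v, hminv, hv⟩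
        have hstab := TVM.stab hτ hlam hlamμ hminu hminv
        have hnn : ∀ j ∈ Finset.univ, 0 ≤ τ j * (u j - v j) ^ 2 :=
          fun j _ => mul_nonneg (hτ j).le (sq_nonneg _)
        have hs : τ i.succ * (u i.succ - v i.succ) ^ 2 ≤ 2 * (μ - lam) * J :=
          le_trans (Finset.single_le_sum hnn (Finset.mem_univ i.succ)) hstab
        have hcs : τ i.castSucc * (u i.castSucc - v i.castSucc) ^ 2 ≤ 2 * (μ - lam) * J :=
          le_trans (Finset.single_le_sum hnn (Finset.mem_univ i.castSucc)) hstab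
        have hkey : u i.succ - u i.castSucc
            = (u i.succ - v i.succ) - (u i.castSucc - v i.castSucc) := by
          rw [hv]; ring
        set A : ℝ := u i.succ - v i.succ with hA
        set B : ℝ := u i.castSucc - v i.castSucc with hB
        have hD2 : D ≤ 2 * A ^ 2 + 2 * B ^ 2 := by
          rw [hDdef, hkey]
          nlinarith [sq_nonneg (A + B)]
        have hμlam : 0 ≤ μ - lam := by linarith
        have hμε : μ - lam < ε := by linarith
        have hm1 : τ i.succ * τ i.castSucc * D
            ≤ 2 * τ i.castSucc * (τ i.succ * A ^ 2) + 2 * τ i.succ * (τ i.castSucc * B ^ 2) := by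
          nlinarith [mul_le_mul_of_nonneg_left hD2 (mul_pos hτs hτc).le]
        have hm2 : 2 * τ i.castSucc * (τ i.succ * A ^ 2) ≤ 2 * τ i.castSucc * (2 * (μ - lam) * J) :=
          by nlinarith [mul_le_mul_of_nonneg_left hs (by linarith : (0:ℝ) ≤ 2 * τ i.castSucc)]
        have hm3 : 2 * τ i.succ * (τ i.castSucc * B ^ 2) ≤ 2 * τ i.succ * (2 * (μ - lam) * J) :=
          by nlinarith [mul_le_mul_of_nonneg_left hcs (by linarith : (0:ℝ) ≤ 2 * τ i.succ)]
        have hm4 : 2 * τ i.castSucc * (2 * (μ - lam) * J) + 2 * τ i.succ * (2 * (μ - lam) * J)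
            ≤ ε * K := by
          rw [hKdef]
          nlinarith [mul_le_mul_of_nonneg_right hμε.le
            (by positivity : (0:ℝ) ≤ 4 * (J + 1) * (τ i.succ + τ i.castSucc)),
            mul_nonneg hμlam (by linarith : (0:ℝ) ≤ τ i.succ + τ i.castSucc)]
        linarith
      have hD0 : D ≤ 0 := by
        by_contra hD
        push_neg at hD
        have hP : 0 < τ i.succ * τ i.castSucc * D := by positivity
        have hε : 0 < τ i.succ * τ i.castSucc * D / (2 * K) := by positivity
        have h1 := claim _ hε
        have h2 : τ i.succ * τ i.castSucc * D / (2 * K) * K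
            = τ i.succ * τ i.castSucc * D / 2 := by
          field_simp
        rw [h2] at h1
        linarith
      have hDge : 0 ≤ D := sq_nonneg _
      have : u i.succ - u i.castSucc = 0 := by
        have : D = 0 := le_antisymm hD0 hDge
        exact pow_eq_zero_iff (by norm_num) |>.mp this
      linarith [this]
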